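/- Let the operator S = ∂U, derived from the potential U, have φ-structure with characteristics (γ₃,γ₄,Δ₂(φ)), where φ is a balanced N-function with characteristics (γ₁,γ₂). Then U is a balanced N-function satisfying (γ₃/γ₂)·φ''(t) ≤ U''(t) ≤ (γ₄/γ₁)·φ''(t) for all t > 0, and the characteristics of U equals ((γ₃/γ₄)·(γ₁²/γ₂), (γ₄/γ₃)·(γ₂²/γ₁)). -/

import Mathlib

open Real Set MeasureTheory Filter Matrix

noncomputable section

/-- The N-function `omega_{p,delta}(t) = int_0^t (delta+s)^(p-2) s ds`. -/
def omg (p δ : ℝ) (t : ℝ) : ℝ := ∫ s in (0:ℝ)..t, (δ + s) ^ (p - 2) * s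

/-- The `A`-approximation of a function `φ`: it equals `φ` on `[0,A]` and is the
second-order Taylor polynomial of `φ` at `A` for `t > A`. -/
def approxA (φ : ℝ → ℝ) (A : ℝ) (t : ℝ) : ℝ :=
  if t ≤ A then φ t
  else (1/2) * deriv (deriv φ) A * t ^ 2 + (deriv φ A - deriv (deriv φ) A * A) * t
    + (φ A - deriv φ A * A + (1/2) * deriv (deriv φ) A * A ^ 2)

/-- `φ` is a regular N-function: continuous, convex, positive for `t > 0`,
`φ(t)/t → 0` as `t → 0⁺`, `φ(t)/t → ∞` as `t → ∞`, `C¹` on `[0,∞)`, `C²` on `(0,∞)`,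
with `φ'' > 0` on `(0,∞)`. -/
structure IsRegularNFunction (φ : ℝ → ℝ) : Prop where
  continuousOn : ContinuousOn φ (Set.Ici 0)
  convexOn : ConvexOn ℝ (Set.Ici 0) φ
  pos : ∀ t : ℝ, 0 < t → 0 < φ t
  tendsto_zero : Filter.Tendsto (fun t => φ t / t) (nhdsWithin 0 (Set.Ioi 0)) (nhds 0)
  tendsto_atTop : Filter.Tendsto (fun t => φ t / t) Filter.atTop Filter.atTop
  diffAt : ∀ t : ℝ, 0 < t → DifferentiableAt ℝ φ t
  deriv_continuousOn : ContinuousOn (deriv φ) (Set.Ici 0)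
  diffAt2 : ∀ t : ℝ, 0 < t → DifferentiableAt ℝ (deriv φ) t
  deriv2_continuousOn : ContinuousOn (deriv (deriv φ)) (Set.Ioi 0)
  deriv2_pos : ∀ t : ℝ, 0 < t → 0 < deriv (deriv φ) t

/-- `φ` is a balanced N-function with characteristics `(γ₁, γ₂)`:
`γ₁ φ'(t) ≤ t φ''(t) ≤ γ₂ φ'(t)` for all `t > 0`. -/
structure IsBalanced (φ : ℝ → ℝ) (γ₁ γ₂ : ℝ) : Prop where
  regular : IsRegularNFunction φ
  gamma1_mem : γ₁ ∈ Set.Ioc (0:ℝ) 1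
  gamma2_ge : 1 ≤ γ₂
  lower : ∀ t : ℝ, 0 < t → γ₁ * deriv φ t ≤ t * deriv (deriv φ) t
  upper : ∀ t : ℝ, 0 < t → t * deriv (deriv φ) t ≤ γ₂ * deriv φ t

/-- `ψ` satisfies the Δ₂-condition with constant `K`. -/
def SatisfiesDelta2 (ψ : ℝ → ℝ) (K : ℝ) : Prop :=
  2 ≤ K ∧ ∀ t : ℝ, 0 ≤ t → ψ (2 * t) ≤ K * ψ t

/-- The complementary N-function `φ*(t) = ∫₀ᵗ (φ')⁻¹(s) ds`, where `(φ')⁻¹` is the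
inverse on `[0,∞)` of the (strictly increasing) derivative `φ'`. -/
def conj (φ : ℝ → ℝ) (t : ℝ) : ℝ :=
  ∫ s in (0:ℝ)..t, Function.invFunOn (deriv φ) (Set.Ici 0) s

abbrev Mat3 := Matrix (Fin 3) (Fin 3) ℝ

/-- The symmetric part `P^sym = (P + Pᵀ)/2`. -/
def symPart (P : Mat3) : Mat3 := (2:ℝ)⁻¹ • (P + Pᵀ)

/-- Frobenius norm of a 3×3 matrix. -/
def frob (P : Mat3) : ℝ := Real.sqrt (∑ i, ∑ j, (P i j) ^ 2)

/-- Scalar product of matrices `P·Q = Σ_{ij} P_{ij} Q_{ij}`. -/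
def dot3 (P Q : Mat3) : ℝ := ∑ i, ∑ j, P i j * Q i j

attribute [local instance] Matrix.frobeniusNormedAddCommGroup Matrix.frobeniusNormedSpace

/-- `U` is an admissible potential: `U ∈ C¹([0,∞)) ∩ C²((0,∞))` with `U(0) = U'(0) = 0`. -/
structure IsPotential (U : ℝ → ℝ) : Prop where
  continuousOn : ContinuousOn U (Set.Ici 0)
  diffAt : ∀ t : ℝ, 0 < t → DifferentiableAt ℝ U t
  deriv_continuousOn : ContinuousOn (deriv U) (Set.Ici 0)
  diffAt2 : ∀ t : ℝ, 0 < t → DifferentiableAt ℝ (deriv U) t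
  deriv2_continuousOn : ContinuousOn (deriv (deriv U)) (Set.Ioi 0)
  zero : U 0 = 0
  deriv_zero : deriv U 0 = 0

/-- `S` is derived from the potential `U`, i.e. `S = ∂U`:
`S(0) = 0` and `S(P) = (U'(|P^sym|)/|P^sym|) P^sym`.  (When `P^sym = 0` the right-hand
side is `0` since it is a scalar multiple of the zero matrix.) -/
def DerivedFrom (S : Mat3 → Mat3) (U : ℝ → ℝ) : Prop :=
  S 0 = 0 ∧ ∀ P : Mat3,
    S P = (deriv U (frob (symPart P)) / frob (symPart P)) • symPart P

/-- The operator derived from the potential `U^A` (the `A`-approximation of `U`),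
i.e. `S^A = ∂(U^A)`. -/
def SAop (U : ℝ → ℝ) (A : ℝ) (P : Mat3) : Mat3 :=
  (deriv (approxA U A) (frob (symPart P)) / frob (symPart P)) • symPart P

/-- `S` has `φ`-structure with characteristics `(γ₃, γ₄, Δ₂(φ))`, where
`a_φ(t) = φ'(t)/t`. -/
structure HasPhiStructure (S : Mat3 → Mat3) (φ : ℝ → ℝ) (γ₃ γ₄ : ℝ) : Prop where
  gamma3_mem : γ₃ ∈ Set.Ioc (0:ℝ) 1
  gamma4_gt : 1 < γ₄
  sym_dep : ∀ P : Mat3, S P = S (symPart P)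
  sym_val : ∀ P : Mat3, (S P)ᵀ = S P
  zero : S 0 = 0
  cont : Continuous S
  smooth : ContDiffOn ℝ 1 S {P : Mat3 | P ≠ 0}
  coercive : ∀ P Q : Mat3, symPart P ≠ 0 →
    γ₃ * (deriv φ (frob (symPart P)) / frob (symPart P)) * frob (symPart Q) ^ 2 ≤
      ∑ i, ∑ j, ∑ k, ∑ l,
        fderiv ℝ S P (Matrix.single k l 1) i j * Q i j * Q k l
  bounded : ∀ P : Mat3, symPart P ≠ 0 → ∀ i j k l : Fin 3,
    |fderiv ℝ S P (Matrix.single k l 1) i j| ≤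
      γ₄ * (deriv φ (frob (symPart P)) / frob (symPart P))

section Helpers

/-- Generic mean-value comparison: if `f` is continuous on `[a,b]` and has nonnegative
derivative on `(a,b)`, then `f a ≤ f b`. -/
lemma le_of_deriv_nonneg_aux {f : ℝ → ℝ} {a b : ℝ} (hab : a ≤ b)
    (hc : ContinuousOn f (Set.Icc a b))
    (hd : ∀ x ∈ Set.Ioo a b, DifferentiableAt ℝ f x)
    (h0 : ∀ x ∈ Set.Ioo a b, 0 ≤ deriv f x) : f a ≤ f b := by
  have := monotoneOn_of_deriv_nonneg (convex_Icc a b) hc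
    (by rw [interior_Icc]; exact fun x hx => (hd x hx).differentiableWithinAt)
    (by rw [interior_Icc]; exact h0)
  exact this (Set.left_mem_Icc.2 hab) (Set.right_mem_Icc.2 hab) hab

lemma RN.derivSM {φ : ℝ → ℝ} (h : IsRegularNFunction φ) :
    StrictMonoOn (deriv φ) (Set.Ici 0) :=
  strictMonoOn_of_deriv_pos (convex_Ici 0) h.deriv_continuousOn
    (fun x hx => h.deriv2_pos x (by rwa [interior_Ici] at hx))

lemma RN.zero {φ : ℝ → ℝ} (h : IsRegularNFunction φ) : φ 0 = 0 := by
  have h1 : Filter.Tendsto φ (nhdsWithin 0 (Set.Ioi 0)) (nhds (φ 0)) :=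
    ((h.continuousOn 0 (Set.mem_Ici.2 le_rfl)).mono Set.Ioi_subset_Ici_self)
  have h2 : Filter.Tendsto φ (nhdsWithin 0 (Set.Ioi 0)) (nhds 0) := by
    have hm : Filter.Tendsto (fun t => (φ t / t) * t) (nhdsWithin 0 (Set.Ioi 0)) (nhds 0) := by
      have := h.tendsto_zero.mul (tendsto_nhdsWithin_of_tendsto_nhds
        (Filter.tendsto_id (α := ℝ)) : Filter.Tendsto (fun t : ℝ => t)
          (nhdsWithin 0 (Set.Ioi 0)) (nhds 0))
      simpa using this
    refine hm.congr' ?_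
    filter_upwards [self_mem_nhdsWithin] with t ht
    exact div_mul_cancel₀ (φ t) (ne_of_gt ht)
  exact tendsto_nhds_unique h1 h2

lemma RN.deriv_nonneg {φ : ℝ → ℝ} (h : IsRegularNFunction φ) {s : ℝ} (hs : 0 < s) :
    0 ≤ deriv φ s := by
  by_contra hneg
  push_neg at hneg
  have hle : φ s ≤ φ 0 := by
    have := le_of_deriv_nonneg_aux (f := fun x => -φ x) hs.le
      ((h.continuousOn.mono (Set.Icc_subset_Ici_self)).neg)
      (fun x hx => (h.diffAt x hx.1).neg)
      (fun x hx => by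
        rw [deriv.fun_neg]
        have : deriv φ x < deriv φ s :=
          RN.derivSM h (Set.mem_Ici.2 (le_of_lt hx.1)) (Set.mem_Ici.2 hs.le) hx.2
        linarith)
    simpa using this
  have := h.pos s hs
  rw [RN.zero h] at hle
  linarith

lemma RN.deriv_zero {φ : ℝ → ℝ} (h : IsRegularNFunction φ) : deriv φ 0 = 0 := by
  have hle : deriv φ 0 ≤ 0 := by
    -- deriv φ 0 ≤ φ t / t for all t > 0
    have key : ∀ t : ℝ, 0 < t → deriv φ 0 ≤ φ t / t := by
      intro t ht
      have := le_of_deriv_nonneg_aux (f := fun x => φ x - deriv φ 0 * x) ht.le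
        (((h.continuousOn.mono Set.Icc_subset_Ici_self)).sub
          ((continuous_const.mul continuous_id).continuousOn))
        (fun x hx => (h.diffAt x hx.1).sub ((differentiableAt_fun_id.const_mul _)))
        (fun x hx => by
          have hd : HasDerivAt (fun x => φ x - deriv φ 0 * x)
              (deriv φ x - deriv φ 0 * 1) x :=
            (h.diffAt x hx.1).hasDerivAt.sub ((hasDerivAt_id x).const_mul (deriv φ 0))
          rw [hd.deriv]
          have hmono : deriv φ 0 ≤ deriv φ x :=
            (RN.derivSM h (Set.mem_Ici.2 le_rfl) (Set.mem_Ici.2 (le_of_lt hx.1)) hx.1).le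
          linarith)
      simp only [RN.zero h, mul_zero, sub_zero] at this
      rw [le_div_iff₀ ht]
      linarith
    refine ge_of_tendsto h.tendsto_zero ?_
    filter_upwards [self_mem_nhdsWithin] with t ht
    exact key t ht
  have hge : 0 ≤ deriv φ 0 := by
    have h1 : Filter.Tendsto (deriv φ) (nhdsWithin 0 (Set.Ioi 0)) (nhds (deriv φ 0)) :=
      (h.deriv_continuousOn 0 (Set.mem_Ici.2 le_rfl)).mono Set.Ioi_subset_Ici_self
    refine ge_of_tendsto h1 ?_
    filter_upwards [self_mem_nhdsWithin] with t ht
    exact RN.deriv_nonneg h ht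
  linarith

lemma RN.deriv_pos {φ : ℝ → ℝ} (h : IsRegularNFunction φ) {s : ℝ} (hs : 0 < s) :
    0 < deriv φ s := by
  have h2 := RN.derivSM h (Set.mem_Ici.2 le_rfl) (Set.mem_Ici.2 hs.le) hs
  rwa [RN.deriv_zero h] at h2

/-- `φ t ≤ t * deriv φ t` for regular N-functions. -/
lemma RN.le_mul_deriv {φ : ℝ → ℝ} (h : IsRegularNFunction φ) {t : ℝ} (ht : 0 < t) :
    φ t ≤ t * deriv φ t := by
  have := le_of_deriv_nonneg_aux (f := fun x => deriv φ t * x - φ x) ht.le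
    (((continuous_const.mul continuous_id).continuousOn).sub
      (h.continuousOn.mono Set.Icc_subset_Ici_self))
    (fun x hx => (differentiableAt_fun_id.const_mul _).sub (h.diffAt x hx.1))
    (fun x hx => by
      have hd : HasDerivAt (fun x => deriv φ t * x - φ x)
          (deriv φ t * 1 - deriv φ x) x :=
        ((hasDerivAt_id x).const_mul (deriv φ t)).sub (h.diffAt x hx.1).hasDerivAt
      rw [hd.deriv]
      have : deriv φ x ≤ deriv φ t :=
        (RN.derivSM h (Set.mem_Ici.2 (le_of_lt hx.1)) (Set.mem_Ici.2 ht.le) hx.2).le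
      linarith)
  simp only [mul_zero, RN.zero h, sub_zero] at this
  linarith [this]

/-- `deriv φ → ∞` at infinity for regular N-functions. -/
lemma RN.deriv_tendsto_atTop {φ : ℝ → ℝ} (h : IsRegularNFunction φ) :
    Filter.Tendsto (deriv φ) Filter.atTop Filter.atTop := by
  refine Filter.tendsto_atTop_mono' _ ?_ h.tendsto_atTop
  filter_upwards [Filter.eventually_gt_atTop 0] with t ht
  rw [div_le_iff₀ ht]
  calc φ t ≤ t * deriv φ t := RN.le_mul_deriv h ht
    _ = deriv φ t * t := mul_comm _ _

end Helpers

section MatrixHelpers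

attribute [local instance] Matrix.frobeniusNormedAddCommGroup Matrix.frobeniusNormedSpace

/-- The basis matrix `E = E₀₀`. -/
def EE : Mat3 := Matrix.single 0 0 (1:ℝ)

lemma symPart_smul_EE (s : ℝ) : symPart (s • EE) = s • EE := by
  ext i j
  fin_cases i <;> fin_cases j <;>
    simp [symPart, EE, Matrix.single, Matrix.of_apply, Matrix.add_apply,
      Matrix.transpose_apply, Matrix.smul_apply, smul_eq_mul] <;> ring

lemma frob_smul_EE {s : ℝ} (hs : 0 ≤ s) : frob (s • EE) = s := by
  have : ∑ i, ∑ j, ((s • EE) i j) ^ 2 = s ^ 2 := by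
    simp [EE, Matrix.single, Matrix.of_apply, Matrix.smul_apply, smul_eq_mul,
      Fin.sum_univ_three]
  rw [frob, this, Real.sqrt_sq hs]

lemma smul_EE_ne_zero {s : ℝ} (hs : s ≠ 0) : s • EE ≠ 0 := by
  intro hcon
  have := congrFun (congrFun hcon 0) 0
  simp [EE, Matrix.single, Matrix.of_apply, Matrix.smul_apply] at this
  exact hs this

/-- The key matrix computation: the derivative of `S` at `t•E` in direction `E`
is `U''(t) • E`. -/
lemma fderiv_S_EE {U : ℝ → ℝ} {S : Mat3 → Mat3} (hU : IsPotential U)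
    (hSU : DerivedFrom S U) {t : ℝ} (ht : 0 < t)
    (hdiff : DifferentiableAt ℝ S (t • EE)) :
    fderiv ℝ S (t • EE) EE = deriv (deriv U) t • EE := by
  have hg : HasDerivAt (fun s : ℝ => s • EE) EE t := by
    exact ((hasDerivAt_id t).smul_const EE).congr_deriv (one_smul ℝ EE)
  have h1 : HasDerivAt (fun s : ℝ => S (s • EE)) (fderiv ℝ S (t • EE) EE) t :=
    hdiff.hasFDerivAt.comp_hasDerivAt t hg
  have h2 : (fun s : ℝ => S (s • EE)) =ᶠ[nhds t] (fun s => deriv U s • EE) := by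
    filter_upwards [Ioi_mem_nhds ht] with s hs
    rw [hSU.2 (s • EE), symPart_smul_EE, frob_smul_EE (le_of_lt hs), smul_smul,
      div_mul_cancel₀ _ (ne_of_gt (α := ℝ) hs)]
  have h3 : HasDerivAt (fun s : ℝ => deriv U s • EE) (deriv (deriv U) t • EE) t :=
    (hU.diffAt2 t ht).hasDerivAt.smul_const EE
  exact (h1.congr_of_eventuallyEq h2.symm).unique h3

end MatrixHelpers

/-- Let `S = ∂U` have `φ`-structure with characteristics
`(γ₃,γ₄,Δ₂(φ))` where `φ` is balanced with characteristics `(γ₁,γ₂)`. Then `U` is a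
balanced N-function with `(γ₃/γ₂) φ''(t) ≤ U''(t) ≤ (γ₄/γ₁) φ''(t)` for `t > 0` and
characteristics `((γ₃/γ₄)(γ₁²/γ₂), (γ₄/γ₃)(γ₂²/γ₁))`. -/
theorem stmt10 (φ U : ℝ → ℝ) (S : Mat3 → Mat3) (γ₁ γ₂ γ₃ γ₄ : ℝ)
    (hφ : IsBalanced φ γ₁ γ₂) (hU : IsPotential U) (hSU : DerivedFrom S U)
    (hstr : HasPhiStructure S φ γ₃ γ₄) :
    IsBalanced U ((γ₃ / γ₄) * (γ₁ ^ 2 / γ₂)) ((γ₄ / γ₃) * (γ₂ ^ 2 / γ₁)) ∧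
    ∀ t : ℝ, 0 < t →
      (γ₃ / γ₂) * deriv (deriv φ) t ≤ deriv (deriv U) t ∧
      deriv (deriv U) t ≤ (γ₄ / γ₁) * deriv (deriv φ) t := by
  obtain ⟨hγ1pos, hγ1le⟩ := hφ.gamma1_mem
  have hγ2 : (1:ℝ) ≤ γ₂ := hφ.gamma2_ge
  obtain ⟨hγ3pos, hγ3le⟩ := hstr.gamma3_mem
  have hγ4 : (1:ℝ) < γ₄ := hstr.gamma4_gt
  have hγ2pos : (0:ℝ) < γ₂ := lt_of_lt_of_le one_pos hγ2
  have hγ4pos : (0:ℝ) < γ₄ := lt_trans one_pos hγ4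
  have hreg := hφ.regular
  -- Step 1: pointwise second-derivative bounds via `a_φ`
  have key : ∀ t : ℝ, 0 < t →
      γ₃ * (deriv φ t / t) ≤ deriv (deriv U) t ∧
      deriv (deriv U) t ≤ γ₄ * (deriv φ t / t) := by
    intro t ht
    have hPne0 : (t • EE : Mat3) ≠ 0 := smul_EE_ne_zero (ne_of_gt ht)
    have hsymne : symPart (t • EE) ≠ 0 := by rw [symPart_smul_EE]; exact hPne0
    have hdiff : DifferentiableAt ℝ S (t • EE) := by
      have hopen : IsOpen {P : Mat3 | P ≠ 0} := isOpen_ne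
      exact (hstr.smooth.contDiffAt (hopen.mem_nhds hPne0)).differentiableAt one_ne_zero
    have hD := fderiv_S_EE hU hSU ht hdiff
    have hfrob : frob (symPart (t • EE)) = t := by
      rw [symPart_smul_EE, frob_smul_EE ht.le]
    have hentry : fderiv ℝ S (t • EE) EE 0 0 = deriv (deriv U) t := by
      rw [hD]
      simp [EE, Matrix.single, Matrix.smul_apply, Matrix.of_apply]
    constructor
    · have hco := hstr.coercive (t • EE) EE hsymne
      rw [hfrob] at hco
      have hsum : (∑ i, ∑ j, ∑ k, ∑ l,
          fderiv ℝ S (t • EE) (Matrix.single k l 1) i j * EE i j * EE k l)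
          = fderiv ℝ S (t • EE) EE 0 0 := by
        simp [EE, Matrix.single, Matrix.of_apply, Fin.sum_univ_three]
      have hsymE : symPart EE = EE := by
        have := symPart_smul_EE 1
        rwa [one_smul] at this
      have hfq : frob (symPart EE) = 1 := by
        rw [hsymE]
        have := frob_smul_EE (s := 1) zero_le_one
        rwa [one_smul] at this
      rw [hsum, hentry, hfq] at hco
      simpa using hco
    · have hb := hstr.bounded (t • EE) hsymne 0 0 0 0
      rw [hfrob] at hb
      have hEEeq : (Matrix.single (0 : Fin 3) (0 : Fin 3) (1:ℝ)) = EE := rfl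
      rw [hEEeq, hentry] at hb
      exact (abs_le.1 hb).2
  -- Step 2: second-derivative comparison with φ''
  have key2 : ∀ t : ℝ, 0 < t →
      (γ₃ / γ₂) * deriv (deriv φ) t ≤ deriv (deriv U) t ∧
      deriv (deriv U) t ≤ (γ₄ / γ₁) * deriv (deriv φ) t := by
    intro t ht
    obtain ⟨k1, k2⟩ := key t ht
    have hup := hφ.upper t ht
    have hlo := hφ.lower t ht
    constructor
    · have h1 : deriv (deriv φ) t / γ₂ ≤ deriv φ t / t := by
        rw [div_le_div_iff₀ hγ2pos ht]
        linarith
      calc (γ₃ / γ₂) * deriv (deriv φ) t = γ₃ * (deriv (deriv φ) t / γ₂) := by ring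
        _ ≤ γ₃ * (deriv φ t / t) := by
            exact mul_le_mul_of_nonneg_left h1 hγ3pos.le
        _ ≤ deriv (deriv U) t := k1
    · have h1 : deriv φ t / t ≤ deriv (deriv φ) t / γ₁ := by
        rw [div_le_div_iff₀ ht hγ1pos]
        linarith
      calc deriv (deriv U) t ≤ γ₄ * (deriv φ t / t) := k2
        _ ≤ γ₄ * (deriv (deriv φ) t / γ₁) := mul_le_mul_of_nonneg_left h1 hγ4pos.le
        _ = (γ₄ / γ₁) * deriv (deriv φ) t := by ring
  -- positivity of U''
  have hU2pos : ∀ t : ℝ, 0 < t → 0 < deriv (deriv U) t := by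
    intro t ht
    have := (key t ht).1
    have hφ' : 0 < deriv φ t := RN.deriv_pos hreg ht
    have : 0 < γ₃ * (deriv φ t / t) := mul_pos hγ3pos (div_pos hφ' ht)
    linarith [(key t ht).1]
  -- Step 3: first-derivative bounds
  have hUd : ∀ t : ℝ, 0 < t →
      (γ₃ / γ₂) * deriv φ t ≤ deriv U t ∧ deriv U t ≤ (γ₄ / γ₁) * deriv φ t := by
    intro t ht
    constructor
    · have := le_of_deriv_nonneg_aux
        (f := fun x => deriv U x - (γ₃ / γ₂) * deriv φ x) ht.le
        ((hU.deriv_continuousOn.mono Set.Icc_subset_Ici_self).sub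
          (continuousOn_const.mul (hreg.deriv_continuousOn.mono Set.Icc_subset_Ici_self)))
        (fun x hx => (hU.diffAt2 x hx.1).sub ((hreg.diffAt2 x hx.1).const_mul _))
        (fun x hx => by
          have hd : HasDerivAt (fun x => deriv U x - (γ₃ / γ₂) * deriv φ x)
              (deriv (deriv U) x - (γ₃ / γ₂) * deriv (deriv φ) x) x :=
            (hU.diffAt2 x hx.1).hasDerivAt.sub
              ((hreg.diffAt2 x hx.1).hasDerivAt.const_mul _)
          rw [hd.deriv]
          have := (key2 x hx.1).1
          linarith)
      simp only [hU.deriv_zero, RN.deriv_zero hreg, mul_zero, sub_zero] at this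
      linarith
    · have := le_of_deriv_nonneg_aux
        (f := fun x => (γ₄ / γ₁) * deriv φ x - deriv U x) ht.le
        ((continuousOn_const.mul (hreg.deriv_continuousOn.mono Set.Icc_subset_Ici_self)).sub
          (hU.deriv_continuousOn.mono Set.Icc_subset_Ici_self))
        (fun x hx => ((hreg.diffAt2 x hx.1).const_mul _).sub (hU.diffAt2 x hx.1))
        (fun x hx => by
          have hd : HasDerivAt (fun x => (γ₄ / γ₁) * deriv φ x - deriv U x)
              ((γ₄ / γ₁) * deriv (deriv φ) x - deriv (deriv U) x) x :=
            ((hreg.diffAt2 x hx.1).hasDerivAt.const_mul _).sub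
              (hU.diffAt2 x hx.1).hasDerivAt
          rw [hd.deriv]
          have := (key2 x hx.1).2
          linarith)
      simp only [hU.deriv_zero, RN.deriv_zero hreg, mul_zero, sub_zero] at this
      linarith
  -- positivity of U'
  have hU1pos : ∀ t : ℝ, 0 < t → 0 < deriv U t := by
    intro t ht
    have h1 := (hUd t ht).1
    have h2 : 0 < (γ₃ / γ₂) * deriv φ t :=
      mul_pos (div_pos hγ3pos hγ2pos) (RN.deriv_pos hreg ht)
    linarith
  -- strict monotonicity of U and U'
  have hUSM : StrictMonoOn U (Set.Ici 0) :=
    strictMonoOn_of_deriv_pos (convex_Ici 0) hU.continuousOn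
      (fun x hx => hU1pos x (by rwa [interior_Ici] at hx))
  have hUdSM : StrictMonoOn (deriv U) (Set.Ici 0) :=
    strictMonoOn_of_deriv_pos (convex_Ici 0) hU.deriv_continuousOn
      (fun x hx => hU2pos x (by rwa [interior_Ici] at hx))
  have hUpos : ∀ t : ℝ, 0 < t → 0 < U t := by
    intro t ht
    have := hUSM (Set.mem_Ici.2 le_rfl) (Set.mem_Ici.2 ht.le) ht
    rwa [hU.zero] at this
  -- U(t) ≤ t U'(t)
  have hUle : ∀ t : ℝ, 0 < t → U t ≤ t * deriv U t := by
    intro t ht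
    have := le_of_deriv_nonneg_aux (f := fun x => deriv U t * x - U x) ht.le
      (((continuous_const.mul continuous_id).continuousOn).sub
        (hU.continuousOn.mono Set.Icc_subset_Ici_self))
      (fun x hx => (differentiableAt_fun_id.const_mul _).sub (hU.diffAt x hx.1))
      (fun x hx => by
        have hd : HasDerivAt (fun x => deriv U t * x - U x)
            (deriv U t * 1 - deriv U x) x :=
          ((hasDerivAt_id x).const_mul (deriv U t)).sub (hU.diffAt x hx.1).hasDerivAt
        rw [hd.deriv]
        have : deriv U x ≤ deriv U t :=
          (hUdSM (Set.mem_Ici.2 (le_of_lt hx.1)) (Set.mem_Ici.2 ht.le) hx.2).le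
        linarith)
    simp only [mul_zero, hU.zero, sub_zero] at this
    linarith
  -- U(t) ≥ (t/2) U'(t/2)
  have hUge : ∀ t : ℝ, 0 < t → (t / 2) * deriv U (t / 2) ≤ U t := by
    intro t ht
    have ht2 : 0 < t / 2 := by linarith
    have := le_of_deriv_nonneg_aux
      (f := fun x => U x - deriv U (t / 2) * x) (a := t / 2) (b := t) (by linarith)
      ((hU.continuousOn.mono (Set.Icc_subset_Ici_self.trans
        (Set.Ici_subset_Ici.2 ht2.le))).sub
        ((continuous_const.mul continuous_id).continuousOn))
      (fun x hx => (hU.diffAt x (lt_trans ht2 hx.1)).sub (differentiableAt_fun_id.const_mul _))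
      (fun x hx => by
        have hxpos : 0 < x := lt_trans ht2 hx.1
        have hd : HasDerivAt (fun x => U x - deriv U (t / 2) * x)
            (deriv U x - deriv U (t / 2) * 1) x :=
          (hU.diffAt x hxpos).hasDerivAt.sub ((hasDerivAt_id x).const_mul (deriv U (t / 2)))
        rw [hd.deriv]
        have : deriv U (t / 2) ≤ deriv U x :=
          (hUdSM (Set.mem_Ici.2 ht2.le) (Set.mem_Ici.2 hxpos.le) hx.1).le
        linarith)
    have hU2 : 0 ≤ U (t / 2) := (hUpos _ ht2).le
    nlinarith [this]
  -- regularity of U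
  have hregU : IsRegularNFunction U := by
    refine ⟨hU.continuousOn, ?_, hUpos, ?_, ?_, hU.diffAt, hU.deriv_continuousOn,
      hU.diffAt2, hU.deriv2_continuousOn, hU2pos⟩
    · -- convexity
      refine MonotoneOn.convexOn_of_deriv (convex_Ici 0) hU.continuousOn ?_ ?_
      · rw [interior_Ici]
        exact fun x hx => (hU.diffAt x hx).differentiableWithinAt
      · rw [interior_Ici]
        exact (hUdSM.monotoneOn).mono Set.Ioi_subset_Ici_self
    · -- tendsto zero
      have hlim : Filter.Tendsto (fun t => (γ₄ / γ₁) * deriv φ t)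
          (nhdsWithin 0 (Set.Ioi 0)) (nhds 0) := by
        have h1 : Filter.Tendsto (deriv φ) (nhdsWithin 0 (Set.Ioi 0)) (nhds (deriv φ 0)) :=
          (hreg.deriv_continuousOn 0 (Set.mem_Ici.2 le_rfl)).mono Set.Ioi_subset_Ici_self
        rw [RN.deriv_zero hreg] at h1
        have := h1.const_mul (γ₄ / γ₁)
        simpa using this
      refine squeeze_zero' ?_ ?_ hlim
      · filter_upwards [self_mem_nhdsWithin] with t ht
        exact div_nonneg (hUpos t ht).le (le_of_lt ht)
      · filter_upwards [self_mem_nhdsWithin] with t ht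
        rw [div_le_iff₀ ht]
        calc U t ≤ t * deriv U t := hUle t ht
          _ ≤ t * ((γ₄ / γ₁) * deriv φ t) :=
            mul_le_mul_of_nonneg_left (hUd t ht).2 (le_of_lt ht)
          _ = (γ₄ / γ₁) * deriv φ t * t := by ring
    · -- tendsto atTop
      have hphi : Filter.Tendsto (fun t : ℝ => (γ₃ / (2 * γ₂)) * deriv φ (t / 2))
          Filter.atTop Filter.atTop := by
        have h2 : Filter.Tendsto (fun t : ℝ => t / 2) Filter.atTop Filter.atTop :=
          Filter.tendsto_id.atTop_div_const (by norm_num)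
        exact ((RN.deriv_tendsto_atTop hreg).comp h2).const_mul_atTop
          (div_pos hγ3pos (by linarith))
      refine Filter.tendsto_atTop_mono' _ ?_ hphi
      filter_upwards [Filter.eventually_gt_atTop 0] with t ht
      have ht2 : 0 < t / 2 := by linarith
      have h1 := hUge t ht
      have h2 := (hUd (t / 2) ht2).1
      rw [le_div_iff₀ ht]
      calc (γ₃ / (2 * γ₂)) * deriv φ (t / 2) * t
          = (t / 2) * ((γ₃ / γ₂) * deriv φ (t / 2)) := by ring
        _ ≤ (t / 2) * deriv U (t / 2) := mul_le_mul_of_nonneg_left h2 ht2.le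
        _ ≤ U t := h1
  -- final assembly
  refine ⟨⟨hregU, ?_, ?_, ?_, ?_⟩, key2⟩
  · constructor
    · exact mul_pos (div_pos hγ3pos hγ4pos) (div_pos (pow_pos hγ1pos 2) hγ2pos)
    · have h1 : γ₃ / γ₄ ≤ 1 := (div_le_one hγ4pos).2 (by linarith)
      have h2 : γ₁ ^ 2 / γ₂ ≤ 1 := (div_le_one hγ2pos).2 (by nlinarith)
      have h3 : (0:ℝ) ≤ γ₁ ^ 2 / γ₂ := div_nonneg (by positivity) hγ2pos.le
      nlinarith
  · have h1 : 1 ≤ γ₄ / γ₃ := (one_le_div hγ3pos).2 (by linarith)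
    have h2 : 1 ≤ γ₂ ^ 2 / γ₁ := (one_le_div hγ1pos).2 (by nlinarith)
    nlinarith
  · -- balanced lower bound for U
    intro t ht
    have hF1 : γ₃ * deriv φ t ≤ t * deriv (deriv U) t := by
      have hk := (key t ht).1
      calc γ₃ * deriv φ t = (γ₃ * (deriv φ t / t)) * t := by
            field_simp
        _ ≤ deriv (deriv U) t * t := mul_le_mul_of_nonneg_right hk ht.le
        _ = t * deriv (deriv U) t := mul_comm _ _
    have hF4 : γ₁ * deriv U t ≤ γ₄ * deriv φ t := by
      have := (hUd t ht).2
      calc γ₁ * deriv U t ≤ γ₁ * ((γ₄ / γ₁) * deriv φ t) :=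
            mul_le_mul_of_nonneg_left this hγ1pos.le
        _ = γ₄ * deriv φ t := by field_simp
    have hU'0 : 0 ≤ deriv U t := (hU1pos t ht).le
    have e1 : γ₁ ^ 2 / γ₂ ≤ γ₁ := by
      rw [div_le_iff₀ hγ2pos]
      nlinarith
    calc γ₃ / γ₄ * (γ₁ ^ 2 / γ₂) * deriv U t
        ≤ γ₃ / γ₄ * γ₁ * deriv U t := by
          apply mul_le_mul_of_nonneg_right _ hU'0
          exact mul_le_mul_of_nonneg_left e1 (div_nonneg hγ3pos.le hγ4pos.le)
      _ = γ₃ / γ₄ * (γ₁ * deriv U t) := by ring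
      _ ≤ γ₃ / γ₄ * (γ₄ * deriv φ t) :=
          mul_le_mul_of_nonneg_left hF4 (div_nonneg hγ3pos.le hγ4pos.le)
      _ = γ₃ * deriv φ t := by field_simp
      _ ≤ t * deriv (deriv U) t := hF1
  · -- balanced upper bound for U
    intro t ht
    have hF2 : t * deriv (deriv U) t ≤ γ₄ * deriv φ t := by
      have hk := (key t ht).2
      calc t * deriv (deriv U) t = deriv (deriv U) t * t := mul_comm _ _
        _ ≤ (γ₄ * (deriv φ t / t)) * t := mul_le_mul_of_nonneg_right hk ht.le
        _ = γ₄ * deriv φ t := by field_simp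
    have hF3 : γ₃ * deriv φ t ≤ γ₂ * deriv U t := by
      have := (hUd t ht).1
      calc γ₃ * deriv φ t = γ₂ * ((γ₃ / γ₂) * deriv φ t) := by field_simp
        _ ≤ γ₂ * deriv U t := mul_le_mul_of_nonneg_left this hγ2pos.le
    have hU'0 : 0 ≤ deriv U t := (hU1pos t ht).le
    have e2 : γ₂ ≤ γ₂ ^ 2 / γ₁ := by
      rw [le_div_iff₀ hγ1pos]
      nlinarith
    calc t * deriv (deriv U) t ≤ γ₄ * deriv φ t := hF2
      _ = γ₄ / γ₃ * (γ₃ * deriv φ t) := by field_simp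
      _ ≤ γ₄ / γ₃ * (γ₂ * deriv U t) :=
          mul_le_mul_of_nonneg_left hF3 (div_nonneg hγ4pos.le hγ3pos.le)
      _ = γ₄ / γ₃ * γ₂ * deriv U t := by ring
      _ ≤ γ₄ / γ₃ * (γ₂ ^ 2 / γ₁) * deriv U t := by
          apply mul_le_mul_of_nonneg_right _ hU'0
          exact mul_le_mul_of_nonneg_left e2 (div_nonneg hγ4pos.le hγ3pos.le)

end
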